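/- arXiv:1505.02124 — 2 statements merged into one kernel-verified Lean document; each statement's English description precedes it below -/
import Mathlib

section
/- Let A and B be positive definite Hermitian n×n matrices. Then tr_C(B) ≤ tr_C(A) · tr_A(B) for any positive definite Hermitian matrix C, where tr_P(Q) denotes the trace of Q with respect to P, i.e. the trace of P⁻¹Q. -/
open scoped ComplexOrder
open Matrix
open scoped MatrixOrder

variable {m : Type*} [Fintype m] [DecidableEq m]

lemma diag_nonneg {M : Matrix m m ℂ} (hM : M.PosSemidef) (i : m) : 0 ≤ M i i := by
  simpa [dotProduct, mulVec, Pi.single_apply, Finset.sum_ite_eq] using hM.dotProduct_mulVec_nonneg (Pi.single i 1)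

lemma trace_nonneg {M : Matrix m m ℂ} (hM : M.PosSemidef) : 0 ≤ M.trace :=
  Finset.sum_nonneg fun i _ => diag_nonneg hM i

lemma trace_mul_nonneg {X Y : Matrix m m ℂ} (hX : X.PosSemidef) (hY : Y.PosSemidef) :
    0 ≤ (X * Y).trace := by
  set S := CFC.sqrt X with hS
  have h1 : S * S = X := CFC.sqrt_mul_sqrt_self X hX.nonneg
  have h2 : (S * Y * S).PosSemidef := by
    have := hY.mul_mul_conjTranspose_same S
    rwa [(Matrix.nonneg_iff_posSemidef.mp (CFC.sqrt_nonneg X)).isHermitian.eq] at this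
  have : (X * Y).trace = (S * Y * S).trace := by
    rw [← h1, Matrix.mul_assoc, Matrix.trace_mul_comm, Matrix.mul_assoc]
  rw [this]
  exact trace_nonneg h2

lemma smul_one_sub_posSemidef {X : Matrix m m ℂ} (hX : X.PosSemidef) :
    (X.trace • (1 : Matrix m m ℂ) - X).PosSemidef := by
  have h := hX.1
  have hU : (h.eigenvectorUnitary : Matrix m m ℂ) * star (h.eigenvectorUnitary : Matrix m m ℂ) = 1 :=
    (Matrix.mem_unitaryGroup_iff).mp h.eigenvectorUnitary.2
  have hU' : star (h.eigenvectorUnitary : Matrix m m ℂ) * (h.eigenvectorUnitary : Matrix m m ℂ) = 1 :=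
    (Matrix.mem_unitaryGroup_iff').mp h.eigenvectorUnitary.2
  have ht : X.trace = ∑ i, (h.eigenvalues i : ℂ) := by
    conv_lhs => rw [(show X = (h.eigenvectorUnitary : Matrix m m ℂ) * Matrix.diagonal (RCLike.ofReal ∘ h.eigenvalues) * star (h.eigenvectorUnitary : Matrix m m ℂ) from h.spectral_theorem)]
    rw [Matrix.trace_mul_cycle, hU', Matrix.one_mul, Matrix.trace_diagonal]
    rfl
  have hdiag : Matrix.diagonal (fun i => X.trace - (h.eigenvalues i : ℂ))
      = X.trace • (1 : Matrix m m ℂ)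
        - Matrix.diagonal (RCLike.ofReal ∘ h.eigenvalues) := by
    ext i j
    by_cases hij : i = j <;> simp [Matrix.diagonal, Matrix.one_apply, hij]
  have key : X.trace • (1 : Matrix m m ℂ) - X
      = (h.eigenvectorUnitary : Matrix m m ℂ)
        * Matrix.diagonal (fun i => X.trace - (h.eigenvalues i : ℂ))
        * star (h.eigenvectorUnitary : Matrix m m ℂ) := by
    rw [hdiag, Matrix.mul_sub, Matrix.sub_mul, ← (show X = (h.eigenvectorUnitary : Matrix m m ℂ) * Matrix.diagonal (RCLike.ofReal ∘ h.eigenvalues) * star (h.eigenvectorUnitary : Matrix m m ℂ) from h.spectral_theorem),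
      mul_smul_comm, smul_mul_assoc, mul_one, hU]
  have hd : (Matrix.diagonal (fun i => X.trace - (h.eigenvalues i : ℂ))).PosSemidef := by
    refine Matrix.PosSemidef.diagonal fun i => ?_
    rw [ht, ← Finset.sum_erase_add _ _ (Finset.mem_univ i), add_sub_cancel_right]
    refine Finset.sum_nonneg fun j _ => ?_
    exact Complex.zero_le_real.mpr (hX.eigenvalues_nonneg j)
  have h2 := hd.mul_mul_conjTranspose_same (h.eigenvectorUnitary : Matrix m m ℂ)
  rw [← Matrix.star_eq_conjTranspose] at h2
  rwa [key]

lemma trace_mul_le_trace_mul_trace {X Y : Matrix m m ℂ}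
    (hX : X.PosSemidef) (hY : Y.PosSemidef) :
    (X * Y).trace ≤ X.trace * Y.trace := by
  have h := trace_mul_nonneg (smul_one_sub_posSemidef hX) hY
  rw [Matrix.sub_mul, Matrix.trace_sub, Matrix.smul_mul, Matrix.one_mul,
    Matrix.trace_smul, smul_eq_mul] at h
  exact sub_nonneg.mp h

theorem stmt_1 (n : ℕ) (A B C : Matrix (Fin n) (Fin n) ℂ)
    (hA : A.PosDef) (hB : B.PosDef) (hC : C.PosDef) :
    (Matrix.trace (C⁻¹ * B)).re ≤
      (Matrix.trace (C⁻¹ * A)).re * (Matrix.trace (A⁻¹ * B)).re := by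
  set S := CFC.sqrt A with hSdef
  have hS : S * S = A := CFC.sqrt_mul_sqrt_self A hA.posSemidef.nonneg
  have hSherm : S.IsHermitian := (Matrix.nonneg_iff_posSemidef.mp (CFC.sqrt_nonneg A)).isHermitian
  have hSdet : S.det ≠ 0 := by
    intro h
    have : A.det = 0 := by rw [← hS, Matrix.det_mul, h, mul_zero]
    exact hA.det_pos.ne' this
  have hSS : S * S⁻¹ = 1 := Matrix.mul_nonsing_inv S (isUnit_iff_ne_zero.mpr hSdet)
  have hSS' : S⁻¹ * S = 1 := Matrix.nonsing_inv_mul S (isUnit_iff_ne_zero.mpr hSdet)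
  have hSiherm : (S⁻¹)ᴴ = S⁻¹ := by
    rw [Matrix.conjTranspose_nonsing_inv, hSherm.eq]
  have hX : (S * C⁻¹ * S).PosSemidef := by
    have := hC.inv.posSemidef.mul_mul_conjTranspose_same S
    rwa [hSherm.eq] at this
  have hY : (S⁻¹ * B * S⁻¹).PosSemidef := by
    have := hB.posSemidef.mul_mul_conjTranspose_same S⁻¹
    rwa [hSiherm] at this
  have hAinv : A⁻¹ = S⁻¹ * S⁻¹ := by rw [← hS, Matrix.mul_inv_rev]
  have h1 : (S * C⁻¹ * S).trace = (C⁻¹ * A).trace := by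
    rw [Matrix.trace_mul_cycle, hS, Matrix.trace_mul_comm]
  have h2 : (S⁻¹ * B * S⁻¹).trace = (A⁻¹ * B).trace := by
    rw [Matrix.trace_mul_cycle, ← hAinv]
  have hprod : (S * C⁻¹ * S) * (S⁻¹ * B * S⁻¹) = S * (C⁻¹ * B) * S⁻¹ := by
    simp only [Matrix.mul_assoc]
    rw [← Matrix.mul_assoc S S⁻¹ (B * S⁻¹), hSS, Matrix.one_mul]
  have h3 : ((S * C⁻¹ * S) * (S⁻¹ * B * S⁻¹)).trace = (C⁻¹ * B).trace := by
    rw [hprod, Matrix.trace_mul_comm, ← Matrix.mul_assoc, hSS', Matrix.one_mul]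
  have hineq : (C⁻¹ * B).trace ≤ (C⁻¹ * A).trace * (A⁻¹ * B).trace := by
    rw [← h1, ← h2, ← h3]
    exact trace_mul_le_trace_mul_trace hX hY
  have h4 : 0 ≤ (C⁻¹ * A).trace := trace_mul_nonneg hC.inv.posSemidef hA.posSemidef
  have h5 : 0 ≤ (A⁻¹ * B).trace := trace_mul_nonneg hA.inv.posSemidef hB.posSemidef
  have e1 : (C⁻¹ * A).trace.im = 0 := by
    have := (Complex.le_def.mp h4).2; simpa using this.symm
  have e2 : (A⁻¹ * B).trace.im = 0 := by
    have := (Complex.le_def.mp h5).2; simpa using this.symm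
  have := (Complex.le_def.mp hineq).1
  rwa [Complex.mul_re, e1, e2, mul_zero, sub_zero] at this
end

section
/- Let A be a positive definite Hermitian n×n matrix and B a positive semidefinite Hermitian n×n matrix. Then det(A) · trace(A⁻¹B) ≥ n · det(A)^((n-1)/n) · det(B)^(1/n); in particular, if det(B) > 0 then trace(A⁻¹B) > 0. -/
open scoped ComplexOrder

lemma aux_trace_eq_sum_eigenvalues {m : ℕ} {C : Matrix (Fin m) (Fin m) ℂ}
    (hC : C.IsHermitian) :
    Matrix.trace C = ((∑ i, hC.eigenvalues i : ℝ) : ℂ) := by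
  have hU : star (hC.eigenvectorUnitary : Matrix (Fin m) (Fin m) ℂ) *
      (hC.eigenvectorUnitary : Matrix (Fin m) (Fin m) ℂ) = 1 :=
    hC.eigenvectorUnitary.prop.1
  conv_lhs => rw [hC.spectral_theorem, Unitary.conjStarAlgAut_apply]
  rw [Matrix.trace_mul_cycle, hU, one_mul, Matrix.trace_diagonal]
  push_cast
  simp [Function.comp]

theorem stmt_2 (n : ℕ) (hn : 1 ≤ n) (A B : Matrix (Fin n) (Fin n) ℂ)
    (hA : A.PosDef) (hB : B.PosSemidef) :
    A.det.re * (Matrix.trace (A⁻¹ * B)).re ≥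
      n * A.det.re ^ (((n : ℝ) - 1) / n) * B.det.re ^ (1 / (n : ℝ)) ∧
    (0 < B.det.re → 0 < (Matrix.trace (A⁻¹ * B)).re) := by
  classical
  have hn' : (0 : ℝ) < n := by positivity
  have hAps := hA.posSemidef
  set S := (open scoped MatrixOrder in CFC.sqrt A) with hSdef
  have hSps : Matrix.PosSemidef S := by open scoped MatrixOrder in exact Matrix.nonneg_iff_posSemidef.mp (CFC.sqrt_nonneg A)
  have hSS : S * S = A := by open scoped MatrixOrder in exact CFC.sqrt_mul_sqrt_self A hAps.nonneg
  -- determinant facts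
  have hdetApos : (0 : ℂ) < A.det := hA.det_pos
  have ha : (0 : ℝ) < A.det.re := (Complex.lt_def.mp hdetApos).1
  have hAre : A.det = ((A.det.re : ℝ) : ℂ) := by
    have him : A.det.im = 0 := ((Complex.lt_def.mp hdetApos).2).symm
    exact Complex.ext rfl (by simp [him])
  have hBre : B.det = ((B.det.re : ℝ) : ℂ) := by
    have := hB.1.det_eq_prod_eigenvalues
    have him : B.det.im = 0 := by
      rw [this, ← RCLike.ofReal_prod]; exact Complex.ofReal_im _
    exact Complex.ext rfl (by simp [him])
  have hb : (0 : ℝ) ≤ B.det.re := by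
    have := hB.1.det_eq_prod_eigenvalues
    have : B.det.re = ∏ i, hB.1.eigenvalues i := by
      rw [this, ← RCLike.ofReal_prod]; exact Complex.ofReal_re _
    rw [this]
    exact Finset.prod_nonneg fun i _ => hB.eigenvalues_nonneg i
  have hdetS : S.det * S.det = A.det := by rw [← Matrix.det_mul, hSS]
  have hdetSne : S.det ≠ 0 := by
    intro h
    rw [h, mul_zero] at hdetS
    exact hdetApos.ne' hdetS.symm
  -- C := S⁻¹ * B * S⁻¹ is PSD
  have hC : Matrix.PosSemidef (S⁻¹ * B * S⁻¹) := by
    have h := hB.conjTranspose_mul_mul_same S⁻¹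
    rwa [hSps.1.inv.eq] at h
  set lam := hC.1.eigenvalues with hlam
  have hlamnn : ∀ i, 0 ≤ lam i := fun i => hC.eigenvalues_nonneg i
  -- trace identification
  have htr : Matrix.trace (A⁻¹ * B) = Matrix.trace (S⁻¹ * B * S⁻¹) := by
    rw [← hSS, Matrix.mul_inv_rev, Matrix.trace_mul_cycle S⁻¹ B S⁻¹]
  have htrsum : (Matrix.trace (A⁻¹ * B)).re = ∑ i, lam i := by
    rw [htr, aux_trace_eq_sum_eigenvalues hC.1]
    simp
    rfl
  -- determinant of C
  have hdetC : (S⁻¹ * B * S⁻¹).det = B.det / A.det := by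
    rw [Matrix.det_mul, Matrix.det_mul, Matrix.det_nonsing_inv, Ring.inverse_eq_inv, ← hdetS]
    field_simp
  have hprodC : (S⁻¹ * B * S⁻¹).det = ((∏ i, lam i : ℝ) : ℂ) := by
    rw [hC.1.det_eq_prod_eigenvalues, ← RCLike.ofReal_prod]
    rfl
  have hprod : ∏ i, lam i = B.det.re / A.det.re := by
    have : ((∏ i, lam i : ℝ) : ℂ) = ((B.det.re / A.det.re : ℝ) : ℂ) := by
      rw [← hprodC, hdetC, hAre, hBre]
      push_cast
      simp
    exact_mod_cast this
  -- AM-GM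
  have amgm := Real.geom_mean_le_arith_mean_weighted Finset.univ
      (fun _ : Fin n => 1 / (n : ℝ)) lam
      (fun i _ => by positivity)
      (by simp [Finset.card_univ]; field_simp)
      (fun i _ => hlamnn i)
  rw [Real.finset_prod_rpow Finset.univ lam (fun i _ => hlamnn i)] at amgm
  have hsum : ∑ i : Fin n, (1 / (n : ℝ)) * lam i = (1 / n) * ∑ i, lam i := by
    rw [Finset.mul_sum]
  rw [hsum, hprod] at amgm
  -- amgm : (B.det.re / A.det.re) ^ (1/n) ≤ (1/n) * ∑ lam
  have key : A.det.re * ((n : ℝ) * (B.det.re / A.det.re) ^ (1 / (n : ℝ)))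
      = n * A.det.re ^ (((n : ℝ) - 1) / n) * B.det.re ^ (1 / (n : ℝ)) := by
    rw [Real.div_rpow hb ha.le,
      show ((n : ℝ) - 1) / n = 1 - 1 / n by field_simp,
      Real.rpow_sub ha, Real.rpow_one]
    have hapow : (0 : ℝ) < A.det.re ^ (1 / (n : ℝ)) := Real.rpow_pos_of_pos ha _
    field_simp
  have main : A.det.re * (Matrix.trace (A⁻¹ * B)).re ≥
      n * A.det.re ^ (((n : ℝ) - 1) / n) * B.det.re ^ (1 / (n : ℝ)) := by
    rw [← key, htrsum]
    have h1 : (n : ℝ) * (B.det.re / A.det.re) ^ (1 / (n : ℝ)) ≤ ∑ i, lam i := by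
      have := mul_le_mul_of_nonneg_left amgm (le_of_lt hn')
      calc (n : ℝ) * (B.det.re / A.det.re) ^ (1 / (n : ℝ))
          ≤ (n : ℝ) * ((1 / n) * ∑ i, lam i) := this
        _ = ∑ i, lam i := by field_simp
    exact mul_le_mul_of_nonneg_left h1 ha.le
  refine ⟨main, fun hbpos => ?_⟩
  have hrhs : (0 : ℝ) < n * A.det.re ^ (((n : ℝ) - 1) / n) * B.det.re ^ (1 / (n : ℝ)) := by
    positivity
  have h2 : 0 < A.det.re * (Matrix.trace (A⁻¹ * B)).re := lt_of_lt_of_le hrhs main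
  nlinarith [h2, ha]
end
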